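/- Let G=(V,E,L) be a multilayer graph, Γ : L → (0,1] a function, min_sup ∈ (0,1] a real threshold, and set γ = min_{ℓ∈L} Γ(ℓ) and λ = ⌈min_sup·|L|⌉. If H ⊆ V with |H| = k is a frequent cross-graph quasi-clique (i.e., there are at least min_sup·|L| layers ℓ ∈ L such that G_ℓ[H] is a Γ(ℓ)-quasi-clique), then H satisfies the (⌈γ(k−1)⌉, λ)-FirmCore property, and hence H is contained in the (⌈γ(k−1)⌉, λ)-FirmCore of G. -/
import Mathlib


open Finset

/-- Degree of `v` in the subgraph of layer `ℓ` induced by the vertex set `S`. -/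
def degS {V L : Type*} (G : L → SimpleGraph V) [∀ ℓ, DecidableRel (G ℓ).Adj]
    (S : Finset V) (ℓ : L) (v : V) : ℕ :=
  (S.filter fun u => (G ℓ).Adj v u).card

/-- `S` satisfies the `(k,λ)`-FirmCore property: every vertex of `S` has, in at least
`λ` layers, at least `k` neighbors inside `S`. -/
def FCProp {V L : Type*} [Fintype L] (G : L → SimpleGraph V)
    [∀ ℓ, DecidableRel (G ℓ).Adj] (k lam : ℕ) (S : Finset V) : Prop :=
  ∀ v ∈ S, lam ≤ (univ.filter fun ℓ : L => k ≤ degS G S ℓ v).card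

/-- `C` is the `(k,λ)`-FirmCore: it satisfies the FirmCore property and is maximal
(under set inclusion) among such sets. -/
def IsFirmCore {V L : Type*} [Fintype L] (G : L → SimpleGraph V)
    [∀ ℓ, DecidableRel (G ℓ).Adj] (k lam : ℕ) (C : Finset V) : Prop :=
  FCProp G k lam C ∧ ∀ S : Finset V, FCProp G k lam S → C ⊆ S → S = C

lemma degS_mono {V L : Type*} (G : L → SimpleGraph V) [∀ ℓ, DecidableRel (G ℓ).Adj]
    {S T : Finset V} (h : S ⊆ T) (ℓ : L) (v : V) : degS G S ℓ v ≤ degS G T ℓ v :=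
  Finset.card_le_card (Finset.filter_subset_filter _ h)

lemma FCProp_union {V L : Type*} [Fintype L] (G : L → SimpleGraph V)
    [∀ ℓ, DecidableRel (G ℓ).Adj] {k lam : ℕ} {A B : Finset V} [DecidableEq V]
    (hA : FCProp G k lam A) (hB : FCProp G k lam B) : FCProp G k lam (A ∪ B) := by
  intro v hv
  rcases Finset.mem_union.1 hv with h | h
  · refine le_trans (hA v h) (Finset.card_le_card ?_)
    intro ℓ hℓ
    simp only [Finset.mem_filter, Finset.mem_univ, true_and] at hℓ ⊢
    exact le_trans hℓ (degS_mono G Finset.subset_union_left ℓ v)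
  · refine le_trans (hB v h) (Finset.card_le_card ?_)
    intro ℓ hℓ
    simp only [Finset.mem_filter, Finset.mem_univ, true_and] at hℓ ⊢
    exact le_trans hℓ (degS_mono G Finset.subset_union_right ℓ v)

/-- A frequent cross-graph quasi-clique `H` of size `k` satisfies the
`(⌈γ(k-1)⌉, ⌈min_sup·|L|⌉)`-FirmCore property (where `γ = min_ℓ Γ(ℓ)`),
and hence is contained in the corresponding FirmCore. -/
theorem quasi_clique_in_firmcore {V L : Type*} [Fintype L] [Nonempty L]
    (G : L → SimpleGraph V) [∀ ℓ, DecidableRel (G ℓ).Adj]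
    (Γ : L → ℝ) (hΓ : ∀ ℓ, 0 < Γ ℓ ∧ Γ ℓ ≤ 1)
    (minSup : ℝ) (hms : 0 < minSup ∧ minSup ≤ 1)
    (H : Finset V) (k : ℕ) (hk : H.card = k)
    (hfreq : minSup * (Fintype.card L : ℝ) ≤
      ((univ.filter fun ℓ : L =>
        ∀ v ∈ H, Γ ℓ * ((H.card : ℝ) - 1) ≤ (degS G H ℓ v : ℝ)).card : ℝ)) :
    FCProp G ⌈(univ.inf' univ_nonempty Γ) * ((k : ℝ) - 1)⌉₊
        ⌈minSup * (Fintype.card L : ℝ)⌉₊ H ∧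
    ∀ C : Finset V,
      IsFirmCore G ⌈(univ.inf' univ_nonempty Γ) * ((k : ℝ) - 1)⌉₊
        ⌈minSup * (Fintype.card L : ℝ)⌉₊ C → H ⊆ C := by
  classical
  have hfc : FCProp G ⌈(univ.inf' univ_nonempty Γ) * ((k : ℝ) - 1)⌉₊
      ⌈minSup * (Fintype.card L : ℝ)⌉₊ H := by
    intro v hv
    have hk1 : (0:ℝ) ≤ (k : ℝ) - 1 := by
      have : 1 ≤ k := by
        rw [← hk]
        exact Finset.card_pos.2 ⟨v, hv⟩
      have : (1:ℝ) ≤ (k:ℝ) := by exact_mod_cast this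
      linarith
    have hsub : (univ.filter fun ℓ : L =>
        ∀ v ∈ H, Γ ℓ * ((H.card : ℝ) - 1) ≤ (degS G H ℓ v : ℝ)) ⊆
        (univ.filter fun ℓ : L =>
          ⌈(univ.inf' univ_nonempty Γ) * ((k : ℝ) - 1)⌉₊ ≤ degS G H ℓ v) := by
      intro ℓ hℓ
      simp only [Finset.mem_filter, Finset.mem_univ, true_and] at hℓ ⊢
      rw [Nat.ceil_le]
      have hinf : (univ.inf' univ_nonempty Γ) ≤ Γ ℓ :=
        Finset.inf'_le _ (Finset.mem_univ ℓ)
      calc (univ.inf' univ_nonempty Γ) * ((k : ℝ) - 1)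
          ≤ Γ ℓ * ((k : ℝ) - 1) := mul_le_mul_of_nonneg_right hinf hk1
        _ ≤ (degS G H ℓ v : ℝ) := by rw [← hk]; exact hℓ v hv
    calc ⌈minSup * (Fintype.card L : ℝ)⌉₊
        ≤ (univ.filter fun ℓ : L =>
            ∀ v ∈ H, Γ ℓ * ((H.card : ℝ) - 1) ≤ (degS G H ℓ v : ℝ)).card := by
          rw [Nat.ceil_le]; exact_mod_cast hfreq
      _ ≤ _ := Finset.card_le_card hsub
  refine ⟨hfc, fun C hC => ?_⟩
  have hu := FCProp_union G hfc hC.1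
  have := hC.2 (H ∪ C) hu Finset.subset_union_right
  intro x hx
  rw [← this]
  exact Finset.mem_union_left _ hx
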